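/- Let d ≥ 1, let σ > 0, and let p be a probability measure on ℝ^d with mean μ and covariance Σ. Then for every d×d real matrix W and every b ∈ ℝ^d, the denoising score-matching loss admits the closed-form decomposition L(W, b) = tr((W − I)Σ(W − I)ᵀ) + σ² tr(W Wᵀ) + ‖(W − I)μ + b‖². -/

import Mathlib

open MeasureTheory ProbabilityTheory Matrix

section helpers
open Real Filter
open scoped NNReal ENNReal

lemma norm_sq_eq_sum {d : ℕ} (y : EuclideanSpace ℝ (Fin d)) : ‖y‖ ^ 2 = ∑ i, y i ^ 2 := by
  rw [EuclideanSpace.norm_eq, Real.sq_sqrt (by positivity)]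
  exact Finset.sum_congr rfl fun i _ => by rw [Real.norm_eq_abs, sq_abs]

lemma integrable_mul_of_memL2 {α : Type*} [MeasurableSpace α] {μ : Measure α} {f g : α → ℝ}
    (hf : MemLp f 2 μ) (hg : MemLp g 2 μ) : Integrable (fun x => f x * g x) μ := by
  have h := hf.integrable_sq.add hg.integrable_sq
  apply Integrable.mono' h (hf.aestronglyMeasurable.mul hg.aestronglyMeasurable)
  filter_upwards with x
  simp only [Pi.mul_apply, Pi.add_apply, Real.norm_eq_abs]
  rw [abs_mul]
  nlinarith [sq_nonneg (|f x| - |g x|), sq_abs (f x), sq_abs (g x), abs_nonneg (f x),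
    abs_nonneg (g x), mul_nonneg (abs_nonneg (f x)) (abs_nonneg (g x))]

end helpers

section gaussparts
open Real Filter
open scoped NNReal ENNReal

variable {v : ℝ≥0}

section oneD
variable {b : ℝ}

lemma aux_sq_atBot : Tendsto (fun x : ℝ => x ^ 2) atBot atTop := by
  have h : Tendsto (fun x : ℝ => (-x) ^ 2) atBot atTop :=
    (tendsto_pow_atTop two_ne_zero).comp tendsto_neg_atBot_atTop
  simpa using h

lemma aux_exp_top (hb : 0 < b) : Tendsto (fun x : ℝ => exp (-b * x ^ 2)) atTop (nhds 0) := by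
  apply Real.tendsto_exp_atBot.comp
  have h : Tendsto (fun x : ℝ => b * x ^ 2) atTop atTop :=
    (tendsto_pow_atTop two_ne_zero).const_mul_atTop hb
  simpa [neg_mul] using tendsto_neg_atBot_iff.mpr h

lemma aux_exp_bot (hb : 0 < b) : Tendsto (fun x : ℝ => exp (-b * x ^ 2)) atBot (nhds 0) := by
  apply Real.tendsto_exp_atBot.comp
  have h : Tendsto (fun x : ℝ => b * x ^ 2) atBot atTop := aux_sq_atBot.const_mul_atTop hb
  simpa [neg_mul] using tendsto_neg_atBot_iff.mpr h

lemma aux_xexp_top (hb : 0 < b) :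
    Tendsto (fun x : ℝ => x * exp (-b * x ^ 2)) atTop (nhds 0) := by
  have h := rpow_mul_exp_neg_mul_sq_isLittleO_exp_neg hb 1
  have h2 : Tendsto (fun x : ℝ => exp (-(1/2) * x)) atTop (nhds 0) := by
    apply Real.tendsto_exp_atBot.comp
    exact (tendsto_const_mul_atBot_of_neg (by norm_num)).mpr tendsto_id
  simpa [Real.rpow_one] using h.isBigO.trans_tendsto h2

lemma aux_xexp_bot (hb : 0 < b) :
    Tendsto (fun x : ℝ => x * exp (-b * x ^ 2)) atBot (nhds 0) := by
  have h : Tendsto (fun x : ℝ => -((-x) * exp (-b * (-x) ^ 2))) atBot (nhds 0) := by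
    simpa using ((aux_xexp_top hb).comp tendsto_neg_atBot_atTop).neg
  simpa using h

lemma integrable_sq_exp (hb : 0 < b) :
    Integrable (fun x : ℝ => x ^ 2 * exp (-b * x ^ 2)) := by
  have h := integrable_rpow_mul_exp_neg_mul_sq hb (s := 2) (by norm_num)
  have e : ∀ x : ℝ, x ^ (2:ℝ) = x ^ (2:ℕ) := fun x => Real.rpow_natCast x 2
  simpa [e] using h

lemma integral_xexp (hb : 0 < b) : ∫ x : ℝ, x * exp (-b * x ^ 2) = 0 := by
  have hderiv : ∀ x : ℝ, HasDerivAt (fun y : ℝ => -(2*b)⁻¹ * exp (-b * y ^ 2))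
      (x * exp (-b * x ^ 2)) x := by
    intro x
    have h1 : HasDerivAt (fun y : ℝ => -b * y ^ 2) (-b * (2 * x)) x := by
      simpa using ((hasDerivAt_pow 2 x).const_mul (-b))
    have h2 := (h1.exp).const_mul (-(2*b)⁻¹)
    refine h2.congr_deriv ?_
    have hbb : 2 * b * (2 * b)⁻¹ = 1 := mul_inv_cancel₀ (by positivity)
    linear_combination (x * exp (-b * x ^ 2)) * hbb
  have h := integral_of_hasDerivAt_of_tendsto hderiv (integrable_mul_exp_neg_mul_sq hb)
    (((aux_exp_bot hb).const_mul (-(2*b)⁻¹)))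
    (((aux_exp_top hb).const_mul (-(2*b)⁻¹)))
  simpa using h

lemma integral_sq_exp (hb : 0 < b) :
    ∫ x : ℝ, x ^ 2 * exp (-b * x ^ 2) = (2*b)⁻¹ * √(π / b) := by
  set c : ℝ := (2*b)⁻¹ with hc
  have hderiv : ∀ x : ℝ, HasDerivAt (fun y : ℝ => -c * (y * exp (-b * y ^ 2)))
      (x ^ 2 * exp (-b * x ^ 2) - c * exp (-b * x ^ 2)) x := by
    intro x
    have h1 : HasDerivAt (fun y : ℝ => -b * y ^ 2) (-b * (2 * x)) x := by
      simpa using ((hasDerivAt_pow 2 x).const_mul (-b))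
    have h2 : HasDerivAt (fun y : ℝ => y * exp (-b * y ^ 2))
        (1 * exp (-b * x ^ 2) + x * (exp (-b * x ^ 2) * (-b * (2 * x)))) x :=
      (hasDerivAt_id x).mul h1.exp
    have h3 := h2.const_mul (-c)
    refine h3.congr_deriv ?_
    have hb' : b ≠ 0 := ne_of_gt hb
    have hcb : 2 * b * c = 1 := by rw [hc]; exact mul_inv_cancel₀ (by positivity)
    linear_combination (x ^ 2 * exp (-b * x ^ 2)) * hcb
  have hint : Integrable (fun x : ℝ => x ^ 2 * exp (-b * x ^ 2) - c * exp (-b * x ^ 2)) :=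
    (integrable_sq_exp hb).sub ((integrable_exp_neg_mul_sq hb).const_mul c)
  have h := integral_of_hasDerivAt_of_tendsto hderiv hint
    ((aux_xexp_bot hb).const_mul (-c)) ((aux_xexp_top hb).const_mul (-c))
  simp only [mul_zero, sub_zero] at h
  have h2 := integral_sub (integrable_sq_exp hb) ((integrable_exp_neg_mul_sq hb).const_mul c)
  rw [h2] at h
  have h3 : ∫ x : ℝ, c * exp (-b * x ^ 2) = c * √(π / b) := by
    rw [MeasureTheory.integral_const_mul, integral_gaussian]
  rw [h3] at h
  linarith

end oneD

lemma gauss_wd (hv : v ≠ 0) :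
    gaussianReal 0 v = volume.withDensity (fun x => ((gaussianPDFReal 0 v x).toNNReal : ℝ≥0∞)) := by
  rw [gaussianReal_of_var_ne_zero 0 hv]
  rfl

lemma gauss_integral_eq (hv : v ≠ 0) (g : ℝ → ℝ) :
    ∫ x, g x ∂gaussianReal 0 v = ∫ x, gaussianPDFReal 0 v x * g x := by
  rw [gauss_wd hv, integral_withDensity_eq_integral_smul
    ((measurable_gaussianPDFReal 0 v).real_toNNReal) g]
  congr 1
  ext x
  rw [NNReal.smul_def, Real.coe_toNNReal _ (gaussianPDFReal_nonneg 0 v x), smul_eq_mul]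

lemma gauss_integrable_iff (hv : v ≠ 0) (g : ℝ → ℝ) :
    Integrable g (gaussianReal 0 v) ↔ Integrable (fun x => gaussianPDFReal 0 v x * g x) := by
  rw [gauss_wd hv, integrable_withDensity_iff_integrable_smul
    ((measurable_gaussianPDFReal 0 v).real_toNNReal)]
  constructor <;> intro h <;> apply h.congr <;> filter_upwards with x <;>
    rw [NNReal.smul_def, Real.coe_toNNReal _ (gaussianPDFReal_nonneg 0 v x), smul_eq_mul]

lemma gauss_pdf_eq (hv : 0 < (v:ℝ)) (x : ℝ) :
    gaussianPDFReal 0 v x = (√(2 * π * v))⁻¹ * exp (-(2*(v:ℝ))⁻¹ * x ^ 2) := by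
  rw [gaussianPDFReal]
  congr 1
  rw [sub_zero]
  congr 1
  field_simp

lemma gauss_integrable_id (hv : 0 < (v:ℝ)) : Integrable (fun x => x) (gaussianReal 0 v) := by
  have hb : 0 < (2*(v:ℝ))⁻¹ := by positivity
  rw [gauss_integrable_iff (by exact_mod_cast hv.ne')]
  have h := (integrable_mul_exp_neg_mul_sq hb).const_mul (√(2 * π * v))⁻¹
  apply h.congr
  filter_upwards with x
  rw [gauss_pdf_eq hv]
  ring

lemma gauss_integrable_sq (hv : 0 < (v:ℝ)) :
    Integrable (fun x => x ^ 2) (gaussianReal 0 v) := by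
  have hb : 0 < (2*(v:ℝ))⁻¹ := by positivity
  rw [gauss_integrable_iff (by exact_mod_cast hv.ne')]
  have h := (integrable_sq_exp hb).const_mul (√(2 * π * v))⁻¹
  apply h.congr
  filter_upwards with x
  rw [gauss_pdf_eq hv]
  ring

lemma gauss_integral_id (hv : 0 < (v:ℝ)) : ∫ x, x ∂gaussianReal 0 v = 0 := by
  have hb : 0 < (2*(v:ℝ))⁻¹ := by positivity
  rw [gauss_integral_eq (by exact_mod_cast hv.ne') (fun x => x)]
  have : ∀ x : ℝ, gaussianPDFReal 0 v x * x
      = (√(2 * π * v))⁻¹ * (x * exp (-(2*(v:ℝ))⁻¹ * x ^ 2)) := by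
    intro x; rw [gauss_pdf_eq hv]; ring
  simp_rw [this, MeasureTheory.integral_const_mul, integral_xexp hb, mul_zero]

lemma gauss_integral_sq (hv : 0 < (v:ℝ)) : ∫ x, x ^ 2 ∂gaussianReal 0 v = v := by
  have hb : 0 < (2*(v:ℝ))⁻¹ := by positivity
  rw [gauss_integral_eq (by exact_mod_cast hv.ne') (fun x => x ^ 2)]
  have : ∀ x : ℝ, gaussianPDFReal 0 v x * x ^ 2
      = (√(2 * π * v))⁻¹ * (x ^ 2 * exp (-(2*(v:ℝ))⁻¹ * x ^ 2)) := by
    intro x; rw [gauss_pdf_eq hv]; ring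
  simp_rw [this, MeasureTheory.integral_const_mul, integral_sq_exp hb]
  have h1 : (2*(2*(v:ℝ))⁻¹)⁻¹ = (v:ℝ) := by
    rw [mul_inv, inv_inv]; field_simp
  have h2 : π / (2*(v:ℝ))⁻¹ = 2 * π * v := by
    field_simp
  rw [h1, h2]
  have h3 : √(2 * π * (v:ℝ)) ≠ 0 := by
    refine ne_of_gt (Real.sqrt_pos.mpr ?_)
    positivity
  field_simp

section pim
variable {d : ℕ} {ν : Measure ℝ} [IsProbabilityMeasure ν]

lemma pi_integral_single (g : ℝ → ℝ) (i : Fin d) :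
    ∫ x : Fin d → ℝ, g (x i) ∂(Measure.pi fun _ : Fin d => ν) = ∫ t, g t ∂ν := by
  letI : MeasureSpace ℝ := ⟨ν⟩
  letI : SigmaFinite (volume : Measure ℝ) := (by infer_instance : SigmaFinite ν)
  have h := MeasureTheory.integral_fintype_prod_eq_prod (𝕜 := ℝ) (μ := fun _ : Fin d => ν)
    (fun k => if k = i then g else fun _ => (1:ℝ))
  have e1 : ∀ x : Fin d → ℝ,
      (∏ k, (if k = i then g else fun _ => (1:ℝ)) (x k)) = g (x i) := by
    intro x
    rw [Finset.prod_eq_single i (fun k _ hk => by simp [if_neg hk]) (by simp)]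
    simp
  simp only [e1] at h
  have e2 : (∏ k, ∫ t, (if k = i then g else fun _ => (1:ℝ)) t ∂ν) = ∫ t, g t ∂ν := by
    rw [Finset.prod_eq_single i (fun k _ hk => by simp [if_neg hk]) (by simp)]
    simp
  exact h.trans e2

lemma pi_integrable_single {g : ℝ → ℝ} (hg : Integrable g ν) (i : Fin d) :
    Integrable (fun x : Fin d → ℝ => g (x i)) (Measure.pi fun _ : Fin d => ν) := by
  letI : MeasureSpace ℝ := ⟨ν⟩
  letI : SigmaFinite (volume : Measure ℝ) := (by infer_instance : SigmaFinite ν)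
  have h : Integrable (fun x : Fin d → ℝ => ∏ k, (if k = i then g else fun _ => (1:ℝ)) (x k)) :=
    Integrable.fintype_prod (𝕜 := ℝ) (fun k => by
      split_ifs
      · exact hg
      · exact integrable_const 1)
  apply h.congr
  filter_upwards with x
  rw [Finset.prod_eq_single i (fun k _ hk => by simp [if_neg hk]) (by simp)]
  simp

lemma pi_integral_pair (g h : ℝ → ℝ) {i j : Fin d} (hij : i ≠ j) :
    ∫ x : Fin d → ℝ, g (x i) * h (x j) ∂(Measure.pi fun _ : Fin d => ν)
      = (∫ t, g t ∂ν) * (∫ t, h t ∂ν) := by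
  letI : MeasureSpace ℝ := ⟨ν⟩
  letI : SigmaFinite (volume : Measure ℝ) := (by infer_instance : SigmaFinite ν)
  have hint := MeasureTheory.integral_fintype_prod_eq_prod (𝕜 := ℝ) (μ := fun _ : Fin d => ν)
    (fun k t => (if k = i then g t else 1) * (if k = j then h t else 1))
  have e1 : ∀ x : Fin d → ℝ,
      (∏ k, ((if k = i then g (x k) else 1) * (if k = j then h (x k) else 1))) =
        g (x i) * h (x j) := by
    intro x
    rw [Finset.prod_mul_distrib]
    simp [Finset.prod_ite_eq']
  simp only [e1] at hint
  have e3 : (∏ k, ∫ t, (if k = i then g t else 1) * (if k = j then h t else 1) ∂ν)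
      = (∫ t, g t ∂ν) * (∫ t, h t ∂ν) := by
    have e2 : ∀ k : Fin d, (∫ t, (if k = i then g t else 1) * (if k = j then h t else 1) ∂ν)
        = (if k = i then ∫ t, g t ∂ν else 1) * (if k = j then ∫ t, h t ∂ν else 1) := by
      intro k
      rcases eq_or_ne k i with rfl | hki
      · have hkj : k ≠ j := hij
        simp [hkj]
      · rcases eq_or_ne k j with rfl | hkj
        · simp [hki]
        · simp [hki, hkj]
    simp only [e2]
    rw [Finset.prod_mul_distrib]
    simp [Finset.prod_ite_eq']
  exact hint.trans e3

lemma pi_integrable_pair {g h : ℝ → ℝ} (hg : Integrable g ν) (hh : Integrable h ν)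
    {i j : Fin d} (hij : i ≠ j) :
    Integrable (fun x : Fin d → ℝ => g (x i) * h (x j)) (Measure.pi fun _ : Fin d => ν) := by
  letI : MeasureSpace ℝ := ⟨ν⟩
  letI : SigmaFinite (volume : Measure ℝ) := (by infer_instance : SigmaFinite ν)
  have hint : Integrable (fun x : Fin d → ℝ =>
      ∏ k, ((if k = i then g (x k) else 1) * (if k = j then h (x k) else 1))) :=
    Integrable.fintype_prod (𝕜 := ℝ)
      (f := fun k t => (if k = i then g t else 1) * (if k = j then h t else 1)) (fun k => by
      rcases eq_or_ne k i with rfl | hki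
      · have hkj : k ≠ j := hij
        simp only [hkj, if_true, if_false, mul_one]; exact hg
      · rcases eq_or_ne k j with rfl | hkj
        · simp only [hki, if_true, if_false, one_mul]; exact hh
        · simpa [hki, hkj] using integrable_const (1:ℝ))
  apply hint.congr
  filter_upwards with x
  rw [Finset.prod_mul_distrib]
  simp [Finset.prod_ite_eq']

end pim

lemma moment_expand {d : ℕ} (q : Measure (EuclideanSpace ℝ (Fin d))) [IsProbabilityMeasure q]
    (m : Fin d → ℝ) (C : Matrix (Fin d) (Fin d) ℝ)
    (hint1 : ∀ i, Integrable (fun y : EuclideanSpace ℝ (Fin d) => y i) q)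
    (hint2 : ∀ i j, Integrable (fun y : EuclideanSpace ℝ (Fin d) => y i * y j) q)
    (hm : ∀ i, ∫ y, y i ∂q = m i)
    (hC : ∀ i j, ∫ y, (y i - m i) * (y j - m j) ∂q = C i j)
    (M : Matrix (Fin d) (Fin d) ℝ) (c : Fin d → ℝ) :
    Integrable (fun y : EuclideanSpace ℝ (Fin d) => ∑ i, ((M.mulVec y) i + c i)^2) q ∧
    ∫ y, ∑ i, ((M.mulVec y) i + c i)^2 ∂q
      = Matrix.trace (M * C * Mᵀ) + ∑ i, ((M.mulVec m) i + c i)^2 := by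
  classical
  set A : Fin d → ℝ := fun i => (M.mulVec m) i + c i with hA
  have zint1 : ∀ j, Integrable (fun y : EuclideanSpace ℝ (Fin d) => y j - m j) q :=
    fun j => (hint1 j).sub (integrable_const _)
  have zint : ∀ j k, Integrable
      (fun y : EuclideanSpace ℝ (Fin d) => (y j - m j) * (y k - m k)) q := by
    intro j k
    have h := ((hint2 j k).add (integrable_const (m j * m k))).sub
      (((hint1 k).const_mul (m j)).add ((hint1 j).const_mul (m k)))
    apply h.congr
    filter_upwards with y
    simp only [Pi.add_apply, Pi.sub_apply]
    ring
  have zmean : ∀ j, ∫ y, (y j - m j) ∂q = 0 := by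
    intro j
    rw [integral_sub (hint1 j) (integrable_const _), hm j, integral_const]
    simp
  have coord : ∀ (y : EuclideanSpace ℝ (Fin d)) (i : Fin d),
      (M.mulVec y) i + c i = (∑ j, M i j * (y j - m j)) + A i := by
    intro y i
    simp only [hA, Matrix.mulVec, dotProduct, mul_sub, Finset.sum_sub_distrib]
    ring
  -- per-index functions
  set F : Fin d → EuclideanSpace ℝ (Fin d) → ℝ :=
    fun i y => ∑ j, ∑ k, (M i j * M i k) * ((y j - m j) * (y k - m k)) with hF
  set G : Fin d → EuclideanSpace ℝ (Fin d) → ℝ :=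
    fun i y => ∑ j, (2 * A i * M i j) * (y j - m j) with hG
  have hF_int : ∀ i, Integrable (F i) q := fun i =>
    integrable_finset_sum _ (fun j _ => integrable_finset_sum _ (fun k _ => (zint j k).const_mul _))
  have hG_int : ∀ i, Integrable (G i) q := fun i =>
    integrable_finset_sum _ (fun j _ => (zint1 j).const_mul _)
  have hpt : ∀ (y : EuclideanSpace ℝ (Fin d)) (i : Fin d),
      ((∑ j, M i j * (y j - m j)) + A i)^2 = F i y + G i y + A i ^ 2 := by
    intro y i
    simp only [hF, hG]
    have e1 : (∑ j, M i j * (y j - m j)) ^ 2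
        = ∑ j, ∑ k, (M i j * M i k) * ((y j - m j) * (y k - m k)) := by
      rw [sq, Finset.sum_mul_sum]
      exact Finset.sum_congr rfl fun j _ => Finset.sum_congr rfl fun k _ => by ring
    have e2 : 2 * (∑ j, M i j * (y j - m j)) * A i
        = ∑ j, (2 * A i * M i j) * (y j - m j) := by
      calc 2 * (∑ j, M i j * (y j - m j)) * A i
          = (∑ j, M i j * (y j - m j)) * (2 * A i) := by ring
        _ = ∑ j, (M i j * (y j - m j)) * (2 * A i) := Finset.sum_mul _ _ _
        _ = ∑ j, (2 * A i * M i j) * (y j - m j) :=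
            Finset.sum_congr rfl fun j _ => by ring
    rw [add_sq, e1, e2]
  have hgi_int : ∀ i, Integrable
      (fun y : EuclideanSpace ℝ (Fin d) => ((∑ j, M i j * (y j - m j)) + A i)^2) q := by
    intro i
    apply (((hF_int i).add (hG_int i)).add (integrable_const (A i ^ 2))).congr
    filter_upwards with y
    exact (hpt y i).symm
  have hgi_val : ∀ i, ∫ y, ((∑ j, M i j * (y j - m j)) + A i)^2 ∂q
      = (∑ j, ∑ k, (M i j * M i k) * C j k) + A i ^ 2 := by
    intro i
    have h1 : ∫ y, ((∑ j, M i j * (y j - m j)) + A i)^2 ∂q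
        = (∫ y, F i y ∂q) + (∫ y, G i y ∂q) + A i ^ 2 := by
      have hFG : Integrable (fun y : EuclideanSpace ℝ (Fin d) => F i y + G i y) q :=
        (hF_int i).add (hG_int i)
      rw [show (fun y : EuclideanSpace ℝ (Fin d) => ((∑ j, M i j * (y j - m j)) + A i)^2)
          = fun y => (F i y + G i y) + A i ^ 2 from funext fun y => hpt y i]
      rw [integral_add hFG (integrable_const _), integral_add (hF_int i) (hG_int i),
        integral_const]
      simp
    rw [h1]
    have h2 : ∫ y, F i y ∂q = ∑ j, ∑ k, (M i j * M i k) * C j k := by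
      simp only [hF]
      rw [integral_finset_sum _ (fun j _ =>
        integrable_finset_sum _ (fun k _ => (zint j k).const_mul _))]
      apply Finset.sum_congr rfl
      intro j _
      rw [integral_finset_sum _ (fun k _ => (zint j k).const_mul _)]
      apply Finset.sum_congr rfl
      intro k _
      rw [MeasureTheory.integral_const_mul, hC j k]
    have h3 : ∫ y, G i y ∂q = 0 := by
      simp only [hG]
      rw [integral_finset_sum _ (fun j _ => (zint1 j).const_mul _)]
      apply Finset.sum_eq_zero
      intro j _
      rw [MeasureTheory.integral_const_mul, zmean j, mul_zero]
    rw [h2, h3, add_zero]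
  constructor
  · apply (integrable_finset_sum _ (fun i _ => hgi_int i)).congr
    filter_upwards with y
    apply Finset.sum_congr rfl
    intro i _
    rw [coord y i]
  · have e : (fun y : EuclideanSpace ℝ (Fin d) => ∑ i, ((M.mulVec y) i + c i)^2)
        = fun y => ∑ i, ((∑ j, M i j * (y j - m j)) + A i)^2 := by
      funext y
      exact Finset.sum_congr rfl fun i _ => by rw [coord y i]
    rw [e, integral_finset_sum _ (fun i _ => hgi_int i)]
    simp only [hgi_val]
    rw [Finset.sum_add_distrib]
    congr 1
    simp only [Matrix.trace, Matrix.diag, Matrix.mul_apply, Matrix.transpose_apply,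
      Finset.sum_mul]
    apply Finset.sum_congr rfl
    intro i _
    rw [Finset.sum_comm]
    apply Finset.sum_congr rfl
    intro j _
    apply Finset.sum_congr rfl
    intro k _
    ring

end gaussparts

/-- The isotropic Gaussian measure `N(0, σ²I)` on `ℝ^d` (with the Euclidean norm),
the product of `d` independent one-dimensional Gaussians of mean `0` and variance `σ²`. -/
noncomputable def gaussVec (d : ℕ) (σ : ℝ) : Measure (EuclideanSpace ℝ (Fin d)) :=
  (Measure.pi fun _ : Fin d => gaussianReal 0 (Real.toNNReal (σ ^ 2))).map
    (MeasurableEquiv.toLp 2 (Fin d → ℝ))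

/-- Reinterpret a plain vector as an element of Euclidean space. -/
def toE {d : ℕ} (v : Fin d → ℝ) : EuclideanSpace ℝ (Fin d) := WithLp.toLp 2 v

/-- The denoising score-matching loss `L(W, b)` of the affine denoiser `D(x) = Wx + b`:
`L(W, b) = ∫ ∫ ‖W(x+ε) + b − x‖² dN(0,σ²I)(ε) dp(x)`. -/
noncomputable def dsmLoss (d : ℕ) (σ : ℝ) (p : Measure (EuclideanSpace ℝ (Fin d)))
    (W : Matrix (Fin d) (Fin d) ℝ) (b : EuclideanSpace ℝ (Fin d)) : ℝ :=
  ∫ x, ∫ ε, ‖toE (W.mulVec (x + ε)) + b - x‖ ^ 2 ∂(gaussVec d σ) ∂p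

/-- Closed-form decomposition of the denoising score-matching loss:
`L(W, b) = tr((W − I)Σ(W − I)ᵀ) + σ² tr(W Wᵀ) + ‖(W − I)μ + b‖²`. -/
theorem dsmLoss_closed_form
    (d : ℕ) (hd : 1 ≤ d) (σ : ℝ) (hσ : 0 < σ)
    (p : Measure (EuclideanSpace ℝ (Fin d))) [IsProbabilityMeasure p]
    (μ : EuclideanSpace ℝ (Fin d)) (S : Matrix (Fin d) (Fin d) ℝ)
    (hp2 : MemLp id 2 p)
    (hmean : ∫ x, x ∂p = μ)
    (hcov : ∀ i j, ∫ x, (x i - μ i) * (x j - μ j) ∂p = S i j)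
    (W : Matrix (Fin d) (Fin d) ℝ) (b : EuclideanSpace ℝ (Fin d)) :
    dsmLoss d σ p W b =
      Matrix.trace ((W - 1) * S * (W - 1)ᵀ) + σ ^ 2 * Matrix.trace (W * Wᵀ) +
        ‖toE ((W - 1).mulVec μ) + b‖ ^ 2 := by
  classical
  have hv : ((Real.toNNReal (σ ^ 2)) : ℝ) = σ ^ 2 :=
    Real.coe_toNNReal _ (sq_nonneg σ)
  have hvpos : 0 < ((Real.toNNReal (σ ^ 2)) : ℝ) := by rw [hv]; positivity
  set ν : Measure ℝ := gaussianReal 0 (Real.toNNReal (σ ^ 2)) with hν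
  have hgv : gaussVec d σ
      = (Measure.pi fun _ : Fin d => ν).map (MeasurableEquiv.toLp 2 (Fin d → ℝ)) := rfl
  have hemb := (MeasurableEquiv.toLp 2 (Fin d → ℝ)).measurableEmbedding
  haveI hprob : IsProbabilityMeasure (gaussVec d σ) := by
    rw [hgv]
    exact Measure.isProbabilityMeasure_map
      (MeasurableEquiv.toLp 2 (Fin d → ℝ)).measurable.aemeasurable
  -- integrability of coordinates of the Gaussian
  have hsqν : Integrable (fun t : ℝ => t * t) ν := by
    apply (gauss_integrable_sq hvpos).congr
    filter_upwards with t
    rw [sq]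
  have hint1g : ∀ i, Integrable (fun ε : EuclideanSpace ℝ (Fin d) => ε i) (gaussVec d σ) := by
    intro i
    rw [hgv, hemb.integrable_map_iff]
    exact pi_integrable_single (gauss_integrable_id hvpos) i
  have hint2g : ∀ i j, Integrable (fun ε : EuclideanSpace ℝ (Fin d) => ε i * ε j)
      (gaussVec d σ) := by
    intro i j
    rw [hgv, hemb.integrable_map_iff]
    rcases eq_or_ne i j with rfl | hij
    · exact pi_integrable_single hsqν i
    · exact pi_integrable_pair (gauss_integrable_id hvpos) (gauss_integrable_id hvpos) hij
  -- mean and covariance of the Gaussian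
  have hmg : ∀ i, ∫ ε, ε i ∂(gaussVec d σ) = (fun _ : Fin d => (0:ℝ)) i := by
    intro i
    rw [hgv, hemb.integral_map]
    have h1 : ∫ x : Fin d → ℝ, x i ∂(Measure.pi fun _ : Fin d => ν) = ∫ t, t ∂ν :=
      pi_integral_single (fun t => t) i
    exact h1.trans (gauss_integral_id hvpos)
  have hCg : ∀ i j, ∫ ε, (ε i - (fun _ : Fin d => (0:ℝ)) i) * (ε j - (fun _ : Fin d => (0:ℝ)) j)
      ∂(gaussVec d σ) = ((σ ^ 2 : ℝ) • (1 : Matrix (Fin d) (Fin d) ℝ)) i j := by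
    intro i j
    simp only [sub_zero]
    rw [hgv, hemb.integral_map]
    rcases eq_or_ne i j with rfl | hij
    · have h1 : ∫ x : Fin d → ℝ, (x i) * (x i) ∂(Measure.pi fun _ : Fin d => ν)
          = ∫ t, t * t ∂ν := pi_integral_single (fun t => t * t) i
      have h2 : ∫ t, t * t ∂ν = σ ^ 2 := by
        have h3 : ∫ t, t * t ∂ν = ∫ t, t ^ 2 ∂ν := by
          apply integral_congr_ae
          filter_upwards with t
          rw [sq]
        rw [h3, gauss_integral_sq hvpos, hv]
      rw [Matrix.smul_apply, Matrix.one_apply_eq, smul_eq_mul, mul_one]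
      exact h1.trans h2
    · have h1 : ∫ x : Fin d → ℝ, (x i) * (x j) ∂(Measure.pi fun _ : Fin d => ν)
          = (∫ t, t ∂ν) * (∫ t, t ∂ν) := pi_integral_pair (fun t => t) (fun t => t) hij
      rw [Matrix.smul_apply, Matrix.one_apply_ne hij, smul_eq_mul, mul_zero]
      have h2 : (∫ t, t ∂ν) * (∫ t, t ∂ν) = 0 := by rw [gauss_integral_id hvpos, mul_zero]
      exact h1.trans h2
  -- moment expansion for the Gaussian with arbitrary affine shift
  have hmomg := fun cx : Fin d → ℝ =>
    moment_expand (gaussVec d σ) (fun _ => 0) ((σ ^ 2 : ℝ) • 1) hint1g hint2g hmg hCg W cx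
  have htr : Matrix.trace (W * ((σ ^ 2 : ℝ) • (1 : Matrix (Fin d) (Fin d) ℝ)) * Wᵀ)
      = σ ^ 2 * Matrix.trace (W * Wᵀ) := by
    rw [Matrix.mul_smul, Matrix.mul_one, Matrix.smul_mul, Matrix.trace_smul, smul_eq_mul]
  have hmv0 : ∀ i, (W.mulVec (fun _ : Fin d => (0:ℝ))) i = 0 := by
    intro i
    simp [Matrix.mulVec, dotProduct]
  -- coordinate bridge for the inner integrand
  have hcoord : ∀ (x ε : EuclideanSpace ℝ (Fin d)) (i : Fin d),
      (toE (W.mulVec (x + ε)) + b - x) i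
        = (W.mulVec ε) i + (((W - 1).mulVec x) i + b i) := by
    intro x ε i
    have h1 : (toE (W.mulVec (x + ε)) + b - x) i = (W.mulVec (x + ε)) i + b i - x i := rfl
    have h2 : (W.mulVec (x + ε)) i = (W.mulVec x) i + (W.mulVec ε) i := by
      simp only [Matrix.mulVec, dotProduct]
      rw [← Finset.sum_add_distrib]
      apply Finset.sum_congr rfl
      intro j _
      have : (x + ε) j = x j + ε j := rfl
      rw [Pi.add_apply, mul_add]
    have h3 : ((W - 1).mulVec x) i = (W.mulVec x) i - x i := by
      simp only [Matrix.mulVec, dotProduct, Matrix.sub_apply, sub_mul]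
      rw [Finset.sum_sub_distrib]
      congr 1
      simp [Matrix.one_apply, ite_mul]
    rw [h1, h2, h3]
    ring
  have hinner : ∀ x : EuclideanSpace ℝ (Fin d),
      ∫ ε, ‖toE (W.mulVec (x + ε)) + b - x‖ ^ 2 ∂(gaussVec d σ)
        = σ ^ 2 * Matrix.trace (W * Wᵀ) + ∑ i, (((W - 1).mulVec x) i + b i) ^ 2 := by
    intro x
    have hcx : ∀ ε : EuclideanSpace ℝ (Fin d), ‖toE (W.mulVec (x + ε)) + b - x‖ ^ 2
        = ∑ i, ((W.mulVec ε) i + (fun i => ((W - 1).mulVec x) i + b i) i) ^ 2 := by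
      intro ε
      rw [norm_sq_eq_sum]
      apply Finset.sum_congr rfl
      intro i _
      rw [hcoord x ε i]
    rw [integral_congr_ae (Filter.Eventually.of_forall hcx),
      (hmomg (fun i => ((W - 1).mulVec x) i + b i)).2, htr]
    congr 1
    apply Finset.sum_congr rfl
    intro i _
    rw [hmv0 i, zero_add]
  -- the measure p side
  have memcoord : ∀ i, MemLp (fun x : EuclideanSpace ℝ (Fin d) => x i) 2 p := fun i =>
    (EuclideanSpace.proj (𝕜 := ℝ) i).comp_memLp' hp2
  have hint1p : ∀ i, Integrable (fun x : EuclideanSpace ℝ (Fin d) => x i) p := fun i =>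
    (memcoord i).integrable one_le_two
  have hint2p : ∀ i j, Integrable (fun x : EuclideanSpace ℝ (Fin d) => x i * x j) p :=
    fun i j => integrable_mul_of_memL2 (memcoord i) (memcoord j)
  have hmp : ∀ i, ∫ x, x i ∂p = (fun i => μ i) i := by
    intro i
    have h := (EuclideanSpace.proj (𝕜 := ℝ) (ι := Fin d) i).integral_comp_comm
      (hp2.integrable one_le_two)
    simp only [id] at h
    rw [hmean] at h
    exact h
  have hmomp := moment_expand p (fun i => μ i) S hint1p hint2p hmp hcov (W - 1) (fun i => b i)
  -- assemble
  rw [dsmLoss]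
  rw [integral_congr_ae (Filter.Eventually.of_forall hinner)]
  have hintf : Integrable (fun x : EuclideanSpace ℝ (Fin d) =>
      ∑ i, (((W - 1).mulVec x) i + b i) ^ 2) p := hmomp.1
  rw [integral_add (integrable_const _) hintf, integral_const, probReal_univ]
  rw [hmomp.2]
  have hnorm : ‖toE ((W - 1).mulVec μ) + b‖ ^ 2
      = ∑ i, (((W - 1).mulVec (fun i => μ i)) i + b i) ^ 2 := by
    rw [norm_sq_eq_sum]
    apply Finset.sum_congr rfl
    intro i _
    rfl
  rw [hnorm]
  simp only [ENNReal.toReal_one, smul_eq_mul, one_mul]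
  ring
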